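/- Let φ₀, φ₁, φ₂, φ₃ be real numbers. Then the implication [for every c ∈ ℂ⁴ with Σ_{k=0}^{3} c_k² = 0 one has Σ_{k=0}^{3} c_k² e^{2iφ_k} = 0] holds if and only if e^{2iφ₀} = e^{2iφ₁} = e^{2iφ₂} = e^{2iφ₃}, i.e., all differences φ_k − φ₀ are integer multiples of π. -/
import Mathlib


open Complex

lemma exp_eq_of_hyp (φ : Fin 4 → ℝ)
    (h : ∀ c : Fin 4 → ℂ, ∑ k, (c k) ^ 2 = 0 → ∑ k, (c k) ^ 2 * Complex.exp (2 * I * φ k) = 0)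
    (k : Fin 4) : Complex.exp (2 * I * φ k) = Complex.exp (2 * I * φ 0) := by
  rcases eq_or_ne k 0 with rfl | hk
  · rfl
  · set c : Fin 4 → ℂ := fun j => if j = 0 then 1 else if j = k then I else 0 with hc
    have h1 : ∑ j, (c j) ^ 2 = 0 := by
      fin_cases k <;> simp_all [hc, Fin.sum_univ_four, Complex.I_sq]
    have h2 := h c h1
    fin_cases k <;> simp_all [hc, Fin.sum_univ_four, Complex.I_sq] <;> linear_combination -h2

/-- The non-entangling criterion for a magic-basis-diagonal unitary with eigenphases φ_k:
[every c ∈ ℂ⁴ with Σ c_k² = 0 satisfies Σ c_k² e^{2iφ_k} = 0] holds iff all differences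
φ_k − φ₀ are integer multiples of π. -/
theorem sum_sq_phase_criterion (φ : Fin 4 → ℝ) :
    (∀ c : Fin 4 → ℂ, ∑ k, (c k) ^ 2 = 0 → ∑ k, (c k) ^ 2 * Complex.exp (2 * I * φ k) = 0) ↔
      ∀ k : Fin 4, ∃ n : ℤ, φ k - φ 0 = n * Real.pi := by
  constructor
  · intro h k
    have he := exp_eq_of_hyp φ h k
    rw [Complex.exp_eq_exp_iff_exists_int] at he
    obtain ⟨n, hn⟩ := he
    refine ⟨n, ?_⟩
    have : (2 : ℂ) * I * φ k = 2 * I * φ 0 + n * (2 * Real.pi * I) := hn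
    have h2 : ((φ k : ℂ) - φ 0) = n * Real.pi := by
      linear_combination (-I/2) * this + ((φ k : ℂ) - φ 0 - n * Real.pi) * Complex.I_sq
    exact_mod_cast by exact_mod_cast congrArg Complex.re h2
  · intro h c hc
    have key : ∀ k : Fin 4, Complex.exp (2 * I * φ k) = Complex.exp (2 * I * φ 0) := by
      intro k
      obtain ⟨n, hn⟩ := h k
      have : (2 : ℂ) * I * φ k = 2 * I * φ 0 + n * (2 * Real.pi * I) := by
        have : (φ k : ℂ) = φ 0 + n * Real.pi := by exact_mod_cast congrArg (Complex.ofReal) (by linarith [hn])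
        rw [this]; ring
      rw [this, Complex.exp_add, Complex.exp_int_mul_two_pi_mul_I, mul_one]
    calc ∑ k, (c k) ^ 2 * Complex.exp (2 * I * φ k)
        = ∑ k, (c k) ^ 2 * Complex.exp (2 * I * φ 0) := by
          exact Finset.sum_congr rfl fun k _ => by rw [key k]
      _ = (∑ k, (c k) ^ 2) * Complex.exp (2 * I * φ 0) := by rw [Finset.sum_mul]
      _ = 0 := by rw [hc, zero_mul]
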